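/- In the formal power series ring ℚ[[x, y]], the identity (xy − xy/(1 + x³ + y³))·1 = xy·(x³ + y³)/(1 + x³ + y³) holds, and moreover (x·y·(x³+y³)/(1+x³+y³))^p = x^p·y^p·((y³/(1+y³))^p + (x³/(1+x³))^p + x³y³·H(x³, y³)) for some formal power series H in two variables, for every integer p ≥ 1. -/

import Mathlib

open MvPowerSeries

noncomputable def Xv : MvPowerSeries (Fin 2) ℚ := MvPowerSeries.X 0
noncomputable def Yv : MvPowerSeries (Fin 2) ℚ := MvPowerSeries.X 1

lemma aux_pow_add_sub_dvd {R : Type*} [CommRing R] (a b : R) (p : ℕ) :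
    a * b ∣ (a + b) ^ (p + 1) - a ^ (p + 1) - b ^ (p + 1) := by
  induction p with
  | zero =>
    have h : (a + b) ^ 1 - a ^ 1 - b ^ 1 = 0 := by ring
    rw [h]
    exact dvd_zero _
  | succ n ih =>
    obtain ⟨q, hq⟩ := ih
    exact ⟨(a + b) * q + b ^ n + a ^ n, by linear_combination (a + b) * hq⟩

theorem taylor_expansion_S_pp :
    (Xv * Yv - Xv * Yv * (1 + Xv ^ 3 + Yv ^ 3)⁻¹
        = Xv * Yv * (Xv ^ 3 + Yv ^ 3) * (1 + Xv ^ 3 + Yv ^ 3)⁻¹) ∧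
    ∀ p : ℕ, 1 ≤ p → ∃ H : MvPowerSeries (Fin 2) ℚ,
      (Xv * Yv * (Xv ^ 3 + Yv ^ 3) * (1 + Xv ^ 3 + Yv ^ 3)⁻¹) ^ p
        = Xv ^ p * Yv ^ p *
            ((Yv ^ 3 * (1 + Yv ^ 3)⁻¹) ^ p + (Xv ^ 3 * (1 + Xv ^ 3)⁻¹) ^ p
              + Xv ^ 3 * Yv ^ 3 * H) := by
  have hc1 : (constantCoeff : MvPowerSeries (Fin 2) ℚ →+* ℚ) (1 + Xv ^ 3 + Yv ^ 3) ≠ 0 := by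
    simp [Xv, Yv]
  have hc2 : (constantCoeff : MvPowerSeries (Fin 2) ℚ →+* ℚ) (1 + Xv ^ 3) ≠ 0 := by
    simp [Xv]
  have hc3 : (constantCoeff : MvPowerSeries (Fin 2) ℚ →+* ℚ) (1 + Yv ^ 3) ≠ 0 := by
    simp [Yv]
  have h1 : (1 + Xv ^ 3 + Yv ^ 3) * (1 + Xv ^ 3 + Yv ^ 3)⁻¹ = 1 :=
    MvPowerSeries.mul_inv_cancel _ hc1
  have h2 : (1 + Xv ^ 3) * (1 + Xv ^ 3)⁻¹ = 1 :=
    MvPowerSeries.mul_inv_cancel _ hc2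
  have h3 : (1 + Yv ^ 3) * (1 + Yv ^ 3)⁻¹ = 1 :=
    MvPowerSeries.mul_inv_cancel _ hc3
  set A : MvPowerSeries (Fin 2) ℚ := Xv ^ 3 with hA
  set B : MvPowerSeries (Fin 2) ℚ := Yv ^ 3 with hB
  set i : MvPowerSeries (Fin 2) ℚ := (1 + Xv ^ 3 + Yv ^ 3)⁻¹ with hi
  set j : MvPowerSeries (Fin 2) ℚ := (1 + Xv ^ 3)⁻¹ with hj
  set k : MvPowerSeries (Fin 2) ℚ := (1 + Yv ^ 3)⁻¹ with hk
  constructor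
  · linear_combination (-(Xv * Yv)) * h1
  · intro p hp
    set s : MvPowerSeries (Fin 2) ℚ := (A + B) * i with hs
    set a : MvPowerSeries (Fin 2) ℚ := A * j with ha
    set b : MvPowerSeries (Fin 2) ℚ := B * k with hb
    -- the unit U = (1+A+B)(1+A)(1+B)
    have hprod : ((1 + A + B) * ((1 + A) * (1 + B))) * (i * j * k) = 1 := by
      calc ((1 + A + B) * ((1 + A) * (1 + B))) * (i * j * k)
          = ((1 + A + B) * i) * (((1 + A) * j) * ((1 + B) * k)) := by ring
        _ = 1 := by rw [h1, h2, h3]; ring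
    have hccU : (constantCoeff : MvPowerSeries (Fin 2) ℚ →+* ℚ) ((1 + A + B) * ((1 + A) * (1 + B))) ≠ 0 := by
      rw [map_mul, map_mul]
      exact mul_ne_zero hc1 (mul_ne_zero hc2 hc3)
    have hUne : (1 + A + B) * ((1 + A) * (1 + B)) ≠ 0 := by
      intro h
      rw [h, map_zero] at hccU
      exact hccU rfl
    -- key cleared-denominator identity
    have key : (s - a - b) * ((1 + A + B) * ((1 + A) * (1 + B)))
        = (A * B * (-(2 + A + B) * (i * j * k))) * ((1 + A + B) * ((1 + A) * (1 + B))) := by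
      linear_combination ((A + B) * (1 + A) * (1 + B)) * h1
        - (A * (1 + A + B) * (1 + B)) * h2
        - (B * (1 + A + B) * (1 + A)) * h3
        + (A * B * (2 + A + B)) * hprod
    have ht : A * B ∣ s - a - b :=
      ⟨-(2 + A + B) * (i * j * k), mul_right_cancel₀ hUne key⟩
    have hab : A * B ∣ a * b := ⟨j * k, by ring⟩
    obtain ⟨q, rfl⟩ : ∃ q, p = q + 1 := ⟨p - 1, (Nat.succ_pred_eq_of_pos hp).symm⟩
    have d1 : A * B ∣ s ^ (q + 1) - (a + b) ^ (q + 1) := by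
      refine dvd_trans ?_ (sub_dvd_pow_sub_pow s (a + b) (q + 1))
      have : s - (a + b) = s - a - b := by ring
      rw [this]; exact ht
    have d2 : A * B ∣ (a + b) ^ (q + 1) - a ^ (q + 1) - b ^ (q + 1) :=
      dvd_trans hab (aux_pow_add_sub_dvd a b q)
    have d3 : A * B ∣ s ^ (q + 1) - a ^ (q + 1) - b ^ (q + 1) := by
      have h := dvd_add d1 d2
      have he : s ^ (q + 1) - (a + b) ^ (q + 1)
          + ((a + b) ^ (q + 1) - a ^ (q + 1) - b ^ (q + 1))
          = s ^ (q + 1) - a ^ (q + 1) - b ^ (q + 1) := by ring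
      rwa [he] at h
    obtain ⟨H, hH⟩ := d3
    refine ⟨H, ?_⟩
    have hsH : s ^ (q + 1) = b ^ (q + 1) + a ^ (q + 1) + A * B * H := by
      linear_combination hH
    have e1 : Xv * Yv * (A + B) * i = Xv * Yv * s := by rw [hs, mul_assoc]
    have e2 : (Xv * Yv * s) ^ (q + 1) = Xv ^ (q + 1) * Yv ^ (q + 1) * s ^ (q + 1) := by
      rw [mul_pow, mul_pow]
    rw [e1, e2, hsH]
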